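/- Let R be a ring, n a positive integer, and A = [a_{ij}] an n-by-n matrix over R, regarded as an element of the full matrix ring M_n(R). Let B = {a_{ij} : 1 ≤ i, j ≤ n} be the set of entries of A. Then P_A = M_n(P_B), i.e., the intersection of all minimal prime ideals of M_n(R) containing A equals the set of n-by-n matrices all of whose entries lie in the intersection P_B of all minimal prime ideals of R containing B. -/

import Mathlib

open TwoSidedIdeal

/-- Left annihilator of a set: `l(S) = {x | ∀ s ∈ S, x*s = 0}`. -/
def lAnn (R : Type*) [Ring R] (S : Set R) : Set R := {x | ∀ s ∈ S, x * s = 0}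

/-- Right annihilator of a set: `r(S) = {x | ∀ s ∈ S, s*x = 0}`. -/
def rAnn (R : Type*) [Ring R] (S : Set R) : Set R := {x | ∀ s ∈ S, s * x = 0}

/-- A ring is semiprime if `I² = 0` implies `I = 0` for every two-sided ideal `I`. -/
def IsSemiprimeRing (R : Type*) [Ring R] : Prop :=
  ∀ I : TwoSidedIdeal R, (∀ a ∈ I, ∀ b ∈ I, a * b = 0) → I = ⊥

/-- A two-sided ideal `P` is prime if it is proper and `IJ ⊆ P` implies `I ⊆ P` or `J ⊆ P`. -/
def IsPrimeTSI {R : Type*} [Ring R] (P : TwoSidedIdeal R) : Prop :=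
  P ≠ ⊤ ∧ ∀ I J : TwoSidedIdeal R, (∀ a ∈ I, ∀ b ∈ J, a * b ∈ P) → I ≤ P ∨ J ≤ P

/-- A minimal prime ideal: a prime two-sided ideal minimal among primes. -/
def IsMinPrime {R : Type*} [Ring R] (P : TwoSidedIdeal R) : Prop :=
  IsPrimeTSI P ∧ ∀ Q : TwoSidedIdeal R, IsPrimeTSI Q → Q ≤ P → Q = P

/-- `Pmin R B` is the intersection of all minimal prime ideals of `R` containing the set `B`
(equal to all of `R` if there are none). -/
def Pmin (R : Type*) [Ring R] (B : Set R) : Set R :=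
  ⋂ P ∈ {P : TwoSidedIdeal R | IsMinPrime P ∧ B ⊆ (P : Set R)}, (P : Set R)

/-- `Pa a` : the intersection of all minimal prime ideals containing `a`. -/
def Pa {R : Type*} [Ring R] (a : R) : Set R := Pmin R {a}

/-- An ideal `I` is a z°-ideal if `P_a ⊆ I` for every `a ∈ I`. -/
def IsZoIdeal {R : Type*} [Ring R] (I : TwoSidedIdeal R) : Prop :=
  ∀ a ∈ I, Pa a ⊆ (I : Set R)

/-- An ideal `I` is a right d-ideal if `r(l(RaR)) ⊆ I` for every `a ∈ I`. -/
def IsRightDIdeal {R : Type*} [Ring R] (I : TwoSidedIdeal R) : Prop :=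
  ∀ a ∈ I, rAnn R (lAnn R (span {a} : Set R)) ⊆ (I : Set R)

/-- An ideal `I` is a right annihilator ideal if `I = r(l(I))`. -/
def IsRightAnnIdeal {R : Type*} [Ring R] (I : TwoSidedIdeal R) : Prop :=
  (I : Set R) = rAnn R (lAnn R (I : Set R))

section Aux

open Matrix

variable {R : Type*} [Ring R]

lemma TSI.eq_top_of_one_mem {I : TwoSidedIdeal R} (h : 1 ∈ I) : I = ⊤ := by
  ext x
  constructor
  · intro _; trivial
  · intro _; simpa using I.mul_mem_left x 1 h

variable {n : ℕ}

lemma sbm_neg (i j : Fin n) (x : R) :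
    Matrix.single i j (-x) = -Matrix.single i j x := by
  ext a b; simp [Matrix.single]; split <;> simp

lemma sbm_mul (i j k l : Fin n) (x y : R) (h : j = k) :
    Matrix.single i j x * Matrix.single k l y = Matrix.single i l (x * y) := by
  subst h; exact single_mul_single_same _ _ _ _ _

/-- The matrix ideal `Mₙ(I)` associated to an ideal `I` of `R`. -/
def matIdeal (I : TwoSidedIdeal R) : TwoSidedIdeal (Matrix (Fin n) (Fin n) R) :=
  TwoSidedIdeal.mk' {M | ∀ i j, M i j ∈ I}
    (fun i j => by simp only [Matrix.zero_apply]; exact I.zero_mem)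
    (fun {x y} hx hy i j => by simpa using I.add_mem (hx i j) (hy i j))
    (fun {x} hx i j => by simpa using I.neg_mem (hx i j))
    (fun {x y} hy i j => by
      rw [Matrix.mul_apply]
      exact I.finsetSum_mem _ _ fun k _ => I.mul_mem_left _ _ (hy k j))
    (fun {x y} hx i j => by
      rw [Matrix.mul_apply]
      exact I.finsetSum_mem _ _ fun k _ => I.mul_mem_right _ _ (hx i k))

lemma mem_matIdeal {I : TwoSidedIdeal R} {M : Matrix (Fin n) (Fin n) R} :
    M ∈ matIdeal (n := n) I ↔ ∀ i j, M i j ∈ I := by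
  simp [matIdeal]

/-- The entry ideal of a matrix ideal. -/
def entIdeal (hn : 0 < n) (J : TwoSidedIdeal (Matrix (Fin n) (Fin n) R)) : TwoSidedIdeal R :=
  TwoSidedIdeal.mk' {x | Matrix.single (⟨0, hn⟩ : Fin n) ⟨0, hn⟩ x ∈ J}
    (by show _ ∈ J; rw [single_zero]; exact J.zero_mem)
    (fun {x y} hx hy => by
      show _ ∈ J
      rw [single_add]
      exact J.add_mem hx hy)
    (fun {x} hx => by
      show _ ∈ J
      rw [sbm_neg]
      exact J.neg_mem hx)
    (fun {x y} hy => by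
      show _ ∈ J
      rw [← sbm_mul _ _ _ _ x y rfl]
      exact J.mul_mem_left _ _ hy)
    (fun {x y} hx => by
      show _ ∈ J
      rw [← sbm_mul _ _ _ _ x y rfl]
      exact J.mul_mem_right _ _ hx)

lemma mem_entIdeal {hn : 0 < n} {J : TwoSidedIdeal (Matrix (Fin n) (Fin n) R)} {x : R} :
    x ∈ entIdeal hn J ↔ Matrix.single (⟨0, hn⟩ : Fin n) ⟨0, hn⟩ x ∈ J := by
  simp [entIdeal]

lemma sandwich (hn : 0 < n) (M : Matrix (Fin n) (Fin n) R) (i j : Fin n) :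
    Matrix.single (⟨0, hn⟩ : Fin n) i 1 * M * Matrix.single j ⟨0, hn⟩ 1
      = Matrix.single (⟨0, hn⟩ : Fin n) ⟨0, hn⟩ (M i j) := by
  ext a b
  rw [mul_assoc]
  by_cases ha : a = (⟨0, hn⟩ : Fin n)
  · subst ha
    rw [single_mul_apply_same]
    by_cases hb : b = (⟨0, hn⟩ : Fin n)
    · subst hb
      rw [mul_single_apply_same]
      simp [Matrix.single]
    · rw [mul_single_apply_of_ne _ _ _ _ _ hb]
      simp [Matrix.single, Ne.symm hb]
  · rw [single_mul_apply_of_ne _ _ _ _ _ ha]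
    simp [Matrix.single, Ne.symm ha]

lemma stdBasis_decomp (hn : 0 < n) (i j : Fin n) (x : R) :
    Matrix.single i j x
      = Matrix.single i (⟨0, hn⟩ : Fin n) 1 * Matrix.single (⟨0, hn⟩ : Fin n) ⟨0, hn⟩ x
        * Matrix.single (⟨0, hn⟩ : Fin n) j 1 := by
  rw [sbm_mul _ _ _ _ _ _ rfl, sbm_mul _ _ _ _ _ _ rfl, one_mul, mul_one]

lemma mem_iff_entries {hn : 0 < n} {J : TwoSidedIdeal (Matrix (Fin n) (Fin n) R)}
    {M : Matrix (Fin n) (Fin n) R} :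
    M ∈ J ↔ ∀ i j, M i j ∈ entIdeal hn J := by
  constructor
  · intro hM i j
    rw [mem_entIdeal, ← sandwich hn M i j]
    exact J.mul_mem_right _ _ (J.mul_mem_left _ _ hM)
  · intro h
    rw [matrix_eq_sum_single M]
    refine J.finsetSum_mem _ _ fun i _ => J.finsetSum_mem _ _ fun j _ => ?_
    rw [stdBasis_decomp hn]
    exact J.mul_mem_right _ _ (J.mul_mem_left _ _ (mem_entIdeal.1 (h i j)))

lemma ent_mat (hn : 0 < n) (I : TwoSidedIdeal R) : entIdeal hn (matIdeal (n := n) I) = I := by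
  ext x
  rw [mem_entIdeal, mem_matIdeal]
  constructor
  · intro h; simpa [Matrix.single] using h ⟨0, hn⟩ ⟨0, hn⟩
  · intro h i j
    by_cases hij : i = (⟨0, hn⟩ : Fin n) ∧ j = (⟨0, hn⟩ : Fin n)
    · obtain ⟨h1, h2⟩ := hij; subst h1; subst h2; simpa [Matrix.single] using h
    · rw [show Matrix.single (⟨0, hn⟩ : Fin n) ⟨0, hn⟩ x i j = 0 by
        simp only [Matrix.single, Matrix.of_apply, ite_eq_right_iff]
        intro ⟨h1, h2⟩; exact absurd ⟨h1.symm, h2.symm⟩ hij]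
      exact I.zero_mem

lemma mat_ent (hn : 0 < n) (J : TwoSidedIdeal (Matrix (Fin n) (Fin n) R)) :
    matIdeal (n := n) (entIdeal hn J) = J := by
  ext M
  rw [mem_matIdeal, ← mem_iff_entries (hn := hn)]

lemma matIdeal_mono {I I' : TwoSidedIdeal R} (h : I ≤ I') :
    matIdeal (n := n) I ≤ matIdeal (n := n) I' := by
  rw [TwoSidedIdeal.le_iff]
  intro M hM
  simp only [SetLike.mem_coe, mem_matIdeal] at hM ⊢
  exact fun i j => h (hM i j)

lemma entIdeal_mono (hn : 0 < n) {J J' : TwoSidedIdeal (Matrix (Fin n) (Fin n) R)} (h : J ≤ J') :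
    entIdeal hn J ≤ entIdeal hn J' := by
  rw [TwoSidedIdeal.le_iff]
  intro x hx
  simp only [SetLike.mem_coe, mem_entIdeal] at hx ⊢
  exact h hx

lemma prime_entIdeal (hn : 0 < n) {J : TwoSidedIdeal (Matrix (Fin n) (Fin n) R)}
    (hJ : IsPrimeTSI J) : IsPrimeTSI (entIdeal hn J) := by
  constructor
  · intro htop
    refine hJ.1 (TSI.eq_top_of_one_mem ?_)
    rw [mem_iff_entries (hn := hn)]
    intro i j
    by_cases hij : i = j
    · subst hij
      rw [show (1 : Matrix (Fin n) (Fin n) R) i i = 1 from Matrix.one_apply_eq i, htop]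
      trivial
    · rw [show (1 : Matrix (Fin n) (Fin n) R) i j = 0 from Matrix.one_apply_ne hij]
      exact (entIdeal hn J).zero_mem
  · intro I1 I2 hprod
    have key : ∀ M ∈ matIdeal (n := n) I1, ∀ N ∈ matIdeal (n := n) I2, M * N ∈ J := by
      intro M hM N hN
      rw [mem_matIdeal] at hM hN
      rw [mem_iff_entries (hn := hn)]
      intro i j
      rw [Matrix.mul_apply]
      exact (entIdeal hn J).finsetSum_mem _ _ fun k _ => hprod _ (hM i k) _ (hN k j)
    rcases hJ.2 _ _ key with h | h
    · left
      calc I1 = entIdeal hn (matIdeal (n := n) I1) := (ent_mat hn I1).symm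
        _ ≤ entIdeal hn J := entIdeal_mono hn h
    · right
      calc I2 = entIdeal hn (matIdeal (n := n) I2) := (ent_mat hn I2).symm
        _ ≤ entIdeal hn J := entIdeal_mono hn h

lemma prime_of_entIdeal (hn : 0 < n) {J : TwoSidedIdeal (Matrix (Fin n) (Fin n) R)}
    (hJ : IsPrimeTSI (entIdeal hn J)) : IsPrimeTSI J := by
  constructor
  · intro htop
    refine hJ.1 (TSI.eq_top_of_one_mem ?_)
    rw [mem_entIdeal, htop]; trivial
  · intro J1 J2 hprod
    have key : ∀ x ∈ entIdeal hn J1, ∀ y ∈ entIdeal hn J2, x * y ∈ entIdeal hn J := by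
      intro x hx y hy
      rw [mem_entIdeal] at *
      rw [← sbm_mul _ _ _ _ x y rfl]
      exact hprod _ hx _ hy
    rcases hJ.2 _ _ key with h | h
    · left
      calc J1 = matIdeal (n := n) (entIdeal hn J1) := (mat_ent hn J1).symm
        _ ≤ matIdeal (n := n) (entIdeal hn J) := matIdeal_mono h
        _ = J := mat_ent hn J
    · right
      calc J2 = matIdeal (n := n) (entIdeal hn J2) := (mat_ent hn J2).symm
        _ ≤ matIdeal (n := n) (entIdeal hn J) := matIdeal_mono h
        _ = J := mat_ent hn J

lemma minPrime_entIdeal (hn : 0 < n) {J : TwoSidedIdeal (Matrix (Fin n) (Fin n) R)}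
    (hJ : IsMinPrime J) : IsMinPrime (entIdeal hn J) := by
  refine ⟨prime_entIdeal hn hJ.1, fun Q hQ hle => ?_⟩
  have h1 : IsPrimeTSI (matIdeal (n := n) Q) := by
    apply prime_of_entIdeal hn
    rw [ent_mat hn]; exact hQ
  have h2 : matIdeal (n := n) Q ≤ J := by
    calc matIdeal (n := n) Q ≤ matIdeal (n := n) (entIdeal hn J) := matIdeal_mono hle
      _ = J := mat_ent hn J
  have h3 := hJ.2 _ h1 h2
  calc Q = entIdeal hn (matIdeal (n := n) Q) := (ent_mat hn Q).symm
    _ = entIdeal hn J := by rw [h3]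

lemma minPrime_matIdeal (hn : 0 < n) {P : TwoSidedIdeal R} (hP : IsMinPrime P) :
    IsMinPrime (matIdeal (n := n) P) := by
  have hent : entIdeal hn (matIdeal (n := n) P) = P := ent_mat hn P
  refine ⟨prime_of_entIdeal hn (by rw [hent]; exact hP.1), fun Q hQ hle => ?_⟩
  have h1 : IsPrimeTSI (entIdeal hn Q) := prime_entIdeal hn hQ
  have h2 : entIdeal hn Q ≤ P := by
    calc entIdeal hn Q ≤ entIdeal hn (matIdeal (n := n) P) := entIdeal_mono hn hle
      _ = P := hent
  have h3 := hP.2 _ h1 h2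
  calc Q = matIdeal (n := n) (entIdeal hn Q) := (mat_ent hn Q).symm
    _ = matIdeal (n := n) P := by rw [h3]

end Aux

/-- Lemma 4.1: for `A ∈ Mₙ(R)`, `P_A = Mₙ(P_B)` where `B` is the set of entries of `A`. -/
theorem stmt6 (R : Type*) [Ring R] (n : ℕ) (hn : 0 < n)
    (A : Matrix (Fin n) (Fin n) R) :
    Pa (R := Matrix (Fin n) (Fin n) R) A =
      {M : Matrix (Fin n) (Fin n) R |
        ∀ i j, M i j ∈ Pmin R (Set.range fun p : Fin n × Fin n => A p.1 p.2)} := by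
  ext M
  simp only [Pa, Pmin, Set.mem_setOf_eq, Set.mem_iInter, SetLike.mem_coe]
  constructor
  · intro hM i j P hP
    obtain ⟨hPmin, hB⟩ := hP
    have hJ : IsMinPrime (matIdeal (n := n) P) := minPrime_matIdeal hn hPmin
    have hA : A ∈ matIdeal (n := n) P := by
      rw [mem_matIdeal]
      intro i' j'
      exact hB ⟨(i', j'), rfl⟩
    have hMP : M ∈ matIdeal (n := n) P := hM (matIdeal (n := n) P) ⟨hJ, by
      intro x hx
      rw [Set.mem_singleton_iff] at hx
      subst hx
      exact hA⟩
    exact mem_matIdeal.1 hMP i j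
  · intro hM J hJ
    obtain ⟨hJmin, hA⟩ := hJ
    have hA' : A ∈ J := hA rfl
    have hP : IsMinPrime (entIdeal hn J) := minPrime_entIdeal hn hJmin
    have hB : (Set.range fun p : Fin n × Fin n => A p.1 p.2) ⊆ (entIdeal hn J : Set R) := by
      rintro x ⟨⟨i, j⟩, rfl⟩
      rw [SetLike.mem_coe]
      exact (mem_iff_entries (hn := hn)).1 hA' i j
    rw [mem_iff_entries (hn := hn)]
    intro i j
    exact hM i j (entIdeal hn J) ⟨hP, hB⟩
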